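/- Let (C, D) be a clan and assume C has binary products. Then the full subcategory of C consisting of the separated objects has all finite limits. -/

import Mathlib

open CategoryTheory CategoryTheory.Limits

universe v u

attribute [local simp] prod.lift_fst prod.lift_snd

/-- A class of display maps on a category `C`: a `MorphismProperty` such that every morphism
satisfying it admits a pullback along every morphism into its codomain, and which is stable
under base change. -/
structure IsDisplayClass {C : Type u} [Category.{v} C] (D : MorphismProperty C) : Prop where
  exists_pullback : ∀ {X Y Z : C} {d : X ⟶ Y}, D d → ∀ f : Z ⟶ Y,
    ∃ (P : C) (fst : P ⟶ X) (snd : P ⟶ Z), IsPullback fst snd d f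
  isStableUnderBaseChange : D.IsStableUnderBaseChange

/-- A clan: a category with a terminal object together with a class of display maps containing
all identities, stable under composition, and containing the unique morphism from every object
to the terminal object. -/
structure IsClan {C : Type u} [Category.{v} C] [HasTerminal C] (D : MorphismProperty C) :
    Prop where
  toIsDisplayClass : IsDisplayClass D
  id_mem : ∀ X : C, D (𝟙 X)
  comp_mem : ∀ {X Y Z : C} (f : X ⟶ Y) (g : Y ⟶ Z), D f → D g → D (f ≫ g)
  terminal_from_mem : ∀ X : C, D (terminal.from X)


section Aux

variable {C : Type u} [Category.{v} C] [HasBinaryProducts C] {D : MorphismProperty C}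

/-- If `q : P ⟶ W` is a mono and `W` is separated, then `P` is separated. -/
theorem aux_diag_of_mono [D.IsStableUnderBaseChange] {P W : C} (q : P ⟶ W) [Mono q]
    (hW : D (diag W)) : D (diag P) := by
  have comm : q ≫ diag W = diag P ≫ prod.map q q := by
    apply Limits.prod.hom_ext <;> simp
  have hpb : IsPullback q (diag P) (diag W) (prod.map q q) := by
    refine ⟨⟨comm⟩, ⟨PullbackCone.IsLimit.mk comm (fun s => s.snd ≫ prod.fst) ?_ ?_ ?_⟩⟩
    · intro s
      have : (s.snd ≫ prod.fst) ≫ q = s.snd ≫ prod.map q q ≫ prod.fst := by simp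
      rw [this, ← Category.assoc, ← s.condition]; simp
    · intro s
      have h1 : (s.snd ≫ prod.fst) ≫ q = s.fst := by
        have : (s.snd ≫ prod.fst) ≫ q = s.snd ≫ prod.map q q ≫ prod.fst := by simp
        rw [this, ← Category.assoc, ← s.condition]; simp
      have h2 : (s.snd ≫ prod.snd) ≫ q = s.fst := by
        have : (s.snd ≫ prod.snd) ≫ q = s.snd ≫ prod.map q q ≫ prod.snd := by simp
        rw [this, ← Category.assoc, ← s.condition]; simp
      apply Limits.prod.hom_ext <;> simp only [Category.assoc, prod.lift_fst, prod.lift_snd,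
        Category.comp_id]
      rw [← cancel_mono q, h1, h2]
    · intro s m _ hm2
      have : m ≫ diag P ≫ prod.fst = s.snd ≫ prod.fst := by rw [← Category.assoc, hm2]
      simpa using this
  exact MorphismProperty.of_isPullback hpb hW

theorem aux_prodMap_mem [D.IsStableUnderBaseChange]
    (hcomp : ∀ {X Y Z : C} (f : X ⟶ Y) (g : Y ⟶ Z), D f → D g → D (f ≫ g))
    {X Y W V : C} {d : X ⟶ Y} {e : W ⟶ V} (hd : D d) (he : D e) : D (prod.map d e) := by
  have h1 : D (prod.map d (𝟙 W)) := by
    have comm : (prod.fst : X ⨯ W ⟶ X) ≫ d = prod.map d (𝟙 W) ≫ prod.fst := by simp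
    have hpb : IsPullback prod.fst (prod.map d (𝟙 W)) d prod.fst := by
      refine ⟨⟨comm⟩, ⟨PullbackCone.IsLimit.mk comm
        (fun s => prod.lift s.fst (s.snd ≫ prod.snd)) ?_ ?_ ?_⟩⟩
      · intro s; simp
      · intro s
        apply Limits.prod.hom_ext
        · simpa using s.condition
        · simp
      · intro s m hm1 hm2
        apply Limits.prod.hom_ext
        · simpa using hm1
        · have : m ≫ prod.map d (𝟙 W) ≫ prod.snd = s.snd ≫ prod.snd := by
            rw [← Category.assoc, hm2]
          simpa using this
    exact MorphismProperty.of_isPullback hpb hd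
  have h2 : D (prod.map (𝟙 Y) e) := by
    have comm : (prod.snd : Y ⨯ W ⟶ W) ≫ e = prod.map (𝟙 Y) e ≫ prod.snd := by simp
    have hpb : IsPullback prod.snd (prod.map (𝟙 Y) e) e prod.snd := by
      refine ⟨⟨comm⟩, ⟨PullbackCone.IsLimit.mk comm
        (fun s => prod.lift (s.snd ≫ prod.fst) s.fst) ?_ ?_ ?_⟩⟩
      · intro s; simp
      · intro s
        apply Limits.prod.hom_ext
        · simp
        · simpa using s.condition
      · intro s m hm1 hm2
        apply Limits.prod.hom_ext
        · have : m ≫ prod.map (𝟙 Y) e ≫ prod.fst = s.snd ≫ prod.fst := by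
            rw [← Category.assoc, hm2]
          simpa using this
        · simpa using hm1
    exact MorphismProperty.of_isPullback hpb he
  have : prod.map d e = prod.map d (𝟙 W) ≫ prod.map (𝟙 Y) e := by simp
  rw [this]
  exact hcomp _ _ h1 h2

theorem aux_diag_prod [D.IsStableUnderBaseChange]
    (hcomp : ∀ {X Y Z : C} (f : X ⟶ Y) (g : Y ⟶ Z), D f → D g → D (f ≫ g))
    {X Y : C} (hX : D (diag X)) (hY : D (diag Y)) : D (diag (X ⨯ Y)) := by
  set t : (X ⨯ Y) ⨯ (X ⨯ Y) ⟶ (X ⨯ X) ⨯ (Y ⨯ Y) :=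
    prod.lift (prod.map prod.fst prod.fst) (prod.map prod.snd prod.snd) with ht
  have : IsIso t := by
    refine ⟨prod.lift (prod.map prod.fst prod.fst) (prod.map prod.snd prod.snd), ?_, ?_⟩ <;>
      apply Limits.prod.hom_ext <;> apply Limits.prod.hom_ext <;> simp [ht]
  have comm : CommSq (𝟙 (X ⨯ Y)) (diag (X ⨯ Y)) (prod.map (diag X) (diag Y)) t := by
    constructor
    apply Limits.prod.hom_ext <;> apply Limits.prod.hom_ext <;> simp [ht]
  have hpb : IsPullback (𝟙 (X ⨯ Y)) (diag (X ⨯ Y)) (prod.map (diag X) (diag Y)) t :=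
    IsPullback.of_horiz_isIso comm
  exact MorphismProperty.of_isPullback hpb (aux_prodMap_mem hcomp hX hY)

end Aux

section Aux2

variable {C : Type u} [Category.{v} C] [HasBinaryProducts C] {D : MorphismProperty C}

theorem aux_closed_terminal [D.IsStableUnderBaseChange] (hid : ∀ X : C, D (𝟙 X)) :
    ObjectProperty.IsClosedUnderLimitsOfShape (fun Y : C => D (diag Y)) (Discrete.{0} PEmpty) := by
  constructor
  rintro X ⟨⟨⟨F, π, hc⟩, h⟩⟩
  suffices key : ∀ (c : Cone F), IsLimit c → D (diag c.pt) from key _ hc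
  intro c hc
  have huniq : ∀ {A : C} (a b : A ⟶ c.pt), a = b := fun a b =>
    hc.hom_ext (fun j => j.as.elim)
  have : IsIso (diag c.pt) :=
    ⟨prod.fst, by simp, by apply Limits.prod.hom_ext <;> exact huniq _ _⟩
  have h := (D.cancel_right_of_respectsIso (𝟙 c.pt) (diag c.pt)).mpr (hid c.pt)
  simpa using h

theorem aux_closed_cospan [D.IsStableUnderBaseChange]
    (hcomp : ∀ {X Y Z : C} (f : X ⟶ Y) (g : Y ⟶ Z), D f → D g → D (f ≫ g)) :
    ObjectProperty.IsClosedUnderLimitsOfShape (fun Y : C => D (diag Y)) WalkingCospan := by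
  constructor
  rintro X ⟨⟨⟨F, π, hc⟩, h⟩⟩
  suffices key : ∀ (c : Cone F), IsLimit c → D (diag c.pt) from key _ hc
  intro c hc
  set m : c.pt ⟶ F.obj WalkingCospan.left ⨯ F.obj WalkingCospan.right :=
    prod.lift (c.π.app WalkingCospan.left) (c.π.app WalkingCospan.right) with hm
  have hmono : Mono m := by
    constructor
    intro A a b hab
    have h1 : a ≫ c.π.app WalkingCospan.left = b ≫ c.π.app WalkingCospan.left := by
      have := congrArg (· ≫ prod.fst) hab
      simpa [hm] using this
    have h2 : a ≫ c.π.app WalkingCospan.right = b ≫ c.π.app WalkingCospan.right := by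
      have := congrArg (· ≫ prod.snd) hab
      simpa [hm] using this
    apply hc.hom_ext
    rintro (_ | j)
    · rw [← c.w WalkingCospan.Hom.inl, ← Category.assoc, h1, Category.assoc]
    · cases j
      · exact h1
      · exact h2
  exact aux_diag_of_mono m (aux_diag_prod hcomp (h _) (h _))

theorem aux_hasPullback (hDisp : IsDisplayClass D) {X Y Z : C}
    (f : X ⟶ Z) (g : Y ⟶ Z) (hZ : D (diag Z)) : HasPullback f g := by
  obtain ⟨P, p, q, hpq⟩ := hDisp.exists_pullback hZ (prod.map f g)
  have hp : p = q ≫ prod.fst ≫ f := by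
    calc p = (p ≫ diag Z) ≫ prod.fst := by simp
    _ = (q ≫ prod.map f g) ≫ prod.fst := by rw [hpq.w]
    _ = q ≫ prod.fst ≫ f := by simp
  have hp' : p = q ≫ prod.snd ≫ g := by
    calc p = (p ≫ diag Z) ≫ prod.snd := by simp
    _ = (q ≫ prod.map f g) ≫ prod.snd := by rw [hpq.w]
    _ = q ≫ prod.snd ≫ g := by simp
  have comm : (q ≫ prod.fst) ≫ f = (q ≫ prod.snd) ≫ g := by
    rw [Category.assoc, ← hp, Category.assoc, ← hp']
  have hpb : IsPullback (q ≫ prod.fst) (q ≫ prod.snd) f g := by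
    refine ⟨⟨comm⟩, ⟨PullbackCone.IsLimit.mk comm
      (fun s => hpq.lift (s.fst ≫ f) (prod.lift s.fst s.snd)
        (by apply Limits.prod.hom_ext <;> simp [s.condition])) ?_ ?_ ?_⟩⟩
    · intro s
      rw [← Category.assoc, hpq.lift_snd]
      simp
    · intro s
      rw [← Category.assoc, hpq.lift_snd]
      simp
    · intro s m hm1 hm2
      apply hpq.hom_ext
      · rw [hpq.lift_fst, hp, ← Category.assoc, ← Category.assoc] at *
        rw [hm1]
      · rw [hpq.lift_snd]
        apply Limits.prod.hom_ext
        · simpa using hm1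
        · simpa using hm2
  exact hpb.hasPullback

end Aux2

/-- in a clan with binary products, the full subcategory of separated objects
has all finite limits. -/
theorem separated_hasFiniteLimits {C : Type u} [Category.{v} C] [HasTerminal C]
    [HasBinaryProducts C] (D : MorphismProperty C) (hD : IsClan D) :
    HasFiniteLimits (ObjectProperty.FullSubcategory (fun Y : C => D (diag Y))) := by
  haveI := hD.toIsDisplayClass.isStableUnderBaseChange
  haveI : HasTerminal (ObjectProperty.FullSubcategory (fun Y : C => D (diag Y))) := by
    haveI := aux_closed_terminal (D := D) hD.id_mem
    exact hasLimitsOfShape_of_closedUnderLimits _ _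
  haveI : HasPullbacks (ObjectProperty.FullSubcategory (fun Y : C => D (diag Y))) := by
    constructor
    intro F
    haveI : HasLimit (F ⋙ ObjectProperty.ι (fun Y : C => D (diag Y))) := by
      haveI : HasPullback
          ((F ⋙ ObjectProperty.ι (fun Y : C => D (diag Y))).map WalkingCospan.Hom.inl)
          ((F ⋙ ObjectProperty.ι (fun Y : C => D (diag Y))).map WalkingCospan.Hom.inr) :=
        aux_hasPullback hD.toIsDisplayClass _ _ ((F.obj WalkingCospan.one).property)
      exact hasLimit_of_iso (diagramIsoCospan _).symm
    haveI := aux_closed_cospan (D := D) (fun f g hf hg => hD.comp_mem f g hf hg)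
    exact hasLimit_of_closedUnderLimits _ _ F
  exact hasFiniteLimits_of_hasTerminal_and_pullbacks
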